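/- Privacy of the LDP-ASGD (averaged) estimator: let K_1, …, K_n be Markov kernels from ℝ^d × 𝒳 to ℝ^d such that, for every fixed θ ∈ ℝ^d, the kernel x ↦ K_i((θ, x)) satisfies (ε_i, δ_i)-LDP. Fix θ_0 ∈ ℝ^d and let (θ_1, …, θ_n) be the sequential trajectory with θ_i ∼ K_i((θ_{i−1}, x_i)) conditionally on θ_{i−1}, with independent randomness across steps. Then the mechanism M̄_n from 𝒳^n to ℝ^d that outputs the law of the Polyak–Ruppert average θ̄_n = (1/n) Σ_{i=1}^n θ_i satisfies (max_{1≤j≤n} ε_j, max_{1≤j≤n} δ_j)-LDP: for any two inputs differing in exactly one coordinate and any measurable E ⊆ ℝ^d, M̄_n(x_1,…,x_n)(E) ≤ e^{max_j ε_j} · M̄_n(x_1′,…,x_n′)(E) + max_j δ_j. -/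

import Mathlib

open MeasureTheory ProbabilityTheory

/-- A mechanism `M` (a map from inputs to output measures) satisfies
`(ε, δ)`-local differential privacy if for every pair of individual inputs
`x, x'` and every measurable event `E`,
`M x E ≤ e^ε * M x' E + δ`. -/
def IsLDP {𝒳 ℛ : Type*} [MeasurableSpace 𝒳] [MeasurableSpace ℛ]
    (M : 𝒳 → Measure ℛ) (ε δ : ℝ) : Prop :=
  ∀ x x' : 𝒳, ∀ E : Set ℛ, MeasurableSet E →
    M x E ≤ ENNReal.ofReal (Real.exp ε) * M x' E + ENNReal.ofReal δ

/-- Joint law of the pair `(θ_n, θ_1 + ⋯ + θ_n)` for the sequential LDP-SGD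
trajectory built from the update kernels `K i : Θ × 𝒳 → Θ` started at `θ₀`
(step `i + 1` updates the current iterate using the datum `x i`), the
randomness of distinct steps being independent.  The second component carries
the running sum of the iterates. -/
noncomputable def sumTrajLaw {Θ 𝒳 : Type*} [MeasurableSpace Θ] [MeasurableSpace 𝒳]
    [Add Θ] [Zero Θ]
    (K : ℕ → Kernel (Θ × 𝒳) Θ) (θ₀ : Θ) (x : ℕ → 𝒳) : ℕ → Measure (Θ × Θ)
  | 0 => Measure.dirac (θ₀, 0)
  | (i + 1) =>
      (sumTrajLaw K θ₀ x i).bind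
        (fun p => (K i (p.1, x i)).map (fun θ => (θ, p.2 + θ)))

/-- The mechanism `M̄_n` outputting the law of the Polyak–Ruppert average
`θ̄_n = (1/n) ∑_{i=1}^n θ_i` of the LDP-SGD trajectory. -/
noncomputable def avgLaw {d : ℕ} {𝒳 : Type*} [MeasurableSpace 𝒳]
    (K : ℕ → Kernel ((Fin d → ℝ) × 𝒳) (Fin d → ℝ)) (θ₀ : Fin d → ℝ)
    (x : ℕ → 𝒳) (n : ℕ) : Measure (Fin d → ℝ) :=
  (sumTrajLaw K θ₀ x n).map (fun p => (n : ℝ)⁻¹ • p.2)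

open scoped ENNReal


lemma dp_lintegral_le {α : Type*} [MeasurableSpace α] (μ μ' : Measure α) [IsFiniteMeasure μ]
    (c δ : ℝ≥0∞) (h : α → ℝ≥0∞) (hm : Measurable h) (h1 : ∀ a, h a ≤ 1)
    (hle : ∀ E : Set α, MeasurableSet E → μ E ≤ c * μ' E + δ) :
    ∫⁻ a, h a ∂μ ≤ c * ∫⁻ a, h a ∂μ' + δ := by
  set f : α → ℝ := fun a => (h a).toReal with hf
  have hfm : Measurable f := hm.ennreal_toReal
  have hfle : ∀ a, f a ≤ 1 := fun a => by
    have := ENNReal.toReal_mono ENNReal.one_ne_top (h1 a)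
    simpa using this
  have hofr : ∀ a, ENNReal.ofReal (f a) = h a := fun a =>
    ENNReal.ofReal_toReal (lt_of_le_of_lt (h1 a) ENNReal.one_lt_top).ne
  have key : ∀ ν : Measure α, ∫⁻ a, h a ∂ν = ∫⁻ t in Set.Ioi (0:ℝ), ν {a | t ≤ f a} := by
    intro ν
    rw [← lintegral_eq_lintegral_meas_le ν (Filter.Eventually.of_forall fun a => ENNReal.toReal_nonneg) hfm.aemeasurable]
    exact lintegral_congr fun a => (hofr a).symm
  have hsplit : Set.Ioi (0:ℝ) = Set.Ioc 0 1 ∪ Set.Ioi 1 := (Set.Ioc_union_Ioi_eq_Ioi zero_le_one).symm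
  have hgm' : Measurable (fun t : ℝ => μ' {a | t ≤ f a}) :=
    Antitone.measurable (fun s t hst => measure_mono (fun a ha => le_trans hst ha))
  have hzero : ∫⁻ t in Set.Ioi (1:ℝ), μ {a | t ≤ f a} = 0 := by
    rw [setLIntegral_congr_fun measurableSet_Ioi
      (fun t (ht : t ∈ Set.Ioi (1:ℝ)) => ?_), lintegral_zero]
    have : {a | t ≤ f a} = ∅ := by
      ext a; simp only [Set.mem_setOf_eq, Set.mem_empty_iff_false, iff_false, not_le]
      exact lt_of_le_of_lt (hfle a) ht
    simp [this]
  calc ∫⁻ a, h a ∂μ = ∫⁻ t in Set.Ioc (0:ℝ) 1, μ {a | t ≤ f a} := by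
        rw [key μ, hsplit, lintegral_union measurableSet_Ioi (Set.Ioc_disjoint_Ioi le_rfl), hzero, add_zero]
    _ ≤ ∫⁻ t in Set.Ioc (0:ℝ) 1, (c * μ' {a | t ≤ f a} + δ) :=
        lintegral_mono fun t => hle _ (measurableSet_le measurable_const hfm)
    _ = c * (∫⁻ t in Set.Ioc (0:ℝ) 1, μ' {a | t ≤ f a}) + δ := by
        rw [lintegral_add_right _ measurable_const, lintegral_const_mul _ hgm',
          setLIntegral_const, Real.volume_Ioc]
        norm_num
    _ ≤ c * (∫⁻ t in Set.Ioi (0:ℝ), μ' {a | t ≤ f a}) + δ := by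
        gcongr
        exact Set.Ioc_subset_Ioi_self
    _ = c * (∫⁻ a, h a ∂μ') + δ := by rw [key μ']

section Traj

variable {Θ 𝒳 : Type*} [MeasurableSpace Θ] [MeasurableSpace 𝒳] [Add Θ] [Zero Θ]
  [MeasurableAdd₂ Θ]

lemma step_meas (κ : Kernel (Θ × 𝒳) Θ) [IsSFiniteKernel κ] (y : 𝒳) {E : Set (Θ × Θ)}
    (hE : MeasurableSet E) :
    Measurable fun p : Θ × Θ => κ (p.1, y) ((fun θ => (θ, p.2 + θ)) ⁻¹' E) := by
  have hg : Measurable fun q : (Θ × Θ) × Θ => (q.2, q.1.2 + q.2) :=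
    measurable_snd.prodMk (measurable_fst.snd.add measurable_snd)
  have := Kernel.measurable_kernel_prodMk_left
    (κ := κ.comap (fun p : Θ × Θ => (p.1, y)) (measurable_fst.prodMk measurable_const)) (hg hE)
  simpa [Kernel.comap_apply, Set.preimage] using this

lemma gp_meas (p : Θ × Θ) : Measurable fun θ : Θ => (θ, p.2 + θ) :=
  measurable_id.prodMk (measurable_const.add measurable_id)

lemma step_meas_measure (κ : Kernel (Θ × 𝒳) Θ) [IsSFiniteKernel κ] (y : 𝒳) :
    Measurable fun p : Θ × Θ => (κ (p.1, y)).map (fun θ => (θ, p.2 + θ)) := by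
  apply Measure.measurable_of_measurable_coe
  intro E hE
  simp_rw [Measure.map_apply (gp_meas _) hE]
  exact step_meas κ y hE

lemma sumTrajLaw_succ_apply (K : ℕ → Kernel (Θ × 𝒳) Θ) [∀ i, IsSFiniteKernel (K i)]
    (θ₀ : Θ) (x : ℕ → 𝒳) (i : ℕ) {E : Set (Θ × Θ)} (hE : MeasurableSet E) :
    sumTrajLaw K θ₀ x (i + 1) E
      = ∫⁻ p, K i (p.1, x i) ((fun θ => (θ, p.2 + θ)) ⁻¹' E) ∂ sumTrajLaw K θ₀ x i := by
  rw [sumTrajLaw, Measure.bind_apply hE (step_meas_measure (K i) (x i)).aemeasurable]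
  exact lintegral_congr fun p => Measure.map_apply (gp_meas p) hE

lemma sumTrajLaw_prob (K : ℕ → Kernel (Θ × 𝒳) Θ) [∀ i, IsMarkovKernel (K i)]
    (θ₀ : Θ) (x : ℕ → 𝒳) : ∀ m, IsProbabilityMeasure (sumTrajLaw K θ₀ x m)
  | 0 => by rw [sumTrajLaw]; infer_instance
  | (m + 1) => by
      haveI := sumTrajLaw_prob K θ₀ x m
      constructor
      rw [sumTrajLaw_succ_apply K θ₀ x m MeasurableSet.univ]
      simp [measure_univ]

end Traj

/-- **Privacy of the LDP-ASGD (averaged) estimator.**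
If for every fixed current iterate `θ` the update kernel `x ↦ K i (θ, x)` of
step `i + 1` satisfies `(ε i, δ i)`-LDP, then the mechanism outputting the law
of the Polyak–Ruppert average `θ̄_n = (1/n) ∑_{i=1}^n θ_i` of the LDP-SGD
trajectory satisfies `(max_j ε j, max_j δ j)`-LDP: for any two inputs differing
in exactly one coordinate and any measurable `E ⊆ ℝ^d`,
`M̄_n(x)(E) ≤ e^{max_j ε j} · M̄_n(x')(E) + max_j δ j`. -/
theorem ldp_asgd_privacy {d n : ℕ} {𝒳 : Type*} [MeasurableSpace 𝒳]
    (K : ℕ → Kernel ((Fin d → ℝ) × 𝒳) (Fin d → ℝ)) [∀ i, IsMarkovKernel (K i)]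
    (ε δ : ℕ → ℝ)
    (hLDP : ∀ i, i < n → ∀ θ : Fin d → ℝ, IsLDP (fun x => K i (θ, x)) (ε i) (δ i))
    (θ₀ : Fin d → ℝ) (x x' : ℕ → 𝒳) (j : ℕ) (hj : j < n)
    (hdiff : x j ≠ x' j) (hsame : ∀ i, i < n → i ≠ j → x i = x' i)
    (E : Set (Fin d → ℝ)) (hE : MeasurableSet E) :
    avgLaw K θ₀ x n E ≤
      ENNReal.ofReal (Real.exp (⨆ i : Fin n, ε i)) * avgLaw K θ₀ x' n E
        + ENNReal.ofReal (⨆ i : Fin n, δ i) := by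
  classical
  set c : ℝ≥0∞ := ENNReal.ofReal (Real.exp (ε j)) with hc
  set δ' : ℝ≥0∞ := ENNReal.ofReal (δ j) with hδ'
  haveI hprob : ∀ m, IsProbabilityMeasure (sumTrajLaw K θ₀ x m) := sumTrajLaw_prob K θ₀ x
  haveI hprob' : ∀ m, IsProbabilityMeasure (sumTrajLaw K θ₀ x' m) := sumTrajLaw_prob K θ₀ x'
  -- the laws agree up to step j
  have heqm : ∀ m, m ≤ j → sumTrajLaw K θ₀ x m = sumTrajLaw K θ₀ x' m := by
    intro m hm
    induction m with
    | zero => rfl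
    | succ m ih =>
        rw [sumTrajLaw, sumTrajLaw, ih (by omega), hsame m (by omega) (by omega)]
  -- main inductive claim on the joint laws
  have claim : ∀ m, j + 1 ≤ m → m ≤ n → ∀ E : Set ((Fin d → ℝ) × (Fin d → ℝ)), MeasurableSet E →
      sumTrajLaw K θ₀ x m E ≤ c * sumTrajLaw K θ₀ x' m E + δ' := by
    intro m hm
    induction m, hm using Nat.le_induction with
    | base =>
        intro _ E hE
        rw [sumTrajLaw_succ_apply K θ₀ x j hE, sumTrajLaw_succ_apply K θ₀ x' j hE,
          ← heqm j le_rfl]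
        calc ∫⁻ p, K j (p.1, x j) ((fun θ => (θ, p.2 + θ)) ⁻¹' E) ∂ sumTrajLaw K θ₀ x j
            ≤ ∫⁻ p, (c * K j (p.1, x' j) ((fun θ => (θ, p.2 + θ)) ⁻¹' E) + δ')
                ∂ sumTrajLaw K θ₀ x j :=
              lintegral_mono fun p => hLDP j hj p.1 (x j) (x' j) _ ((gp_meas p) hE)
          _ = c * (∫⁻ p, K j (p.1, x' j) ((fun θ => (θ, p.2 + θ)) ⁻¹' E)
                ∂ sumTrajLaw K θ₀ x j) + δ' := by
              rw [lintegral_add_right _ measurable_const,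
                lintegral_const_mul _ (step_meas (K j) (x' j) hE), lintegral_const,
                measure_univ, mul_one]
    | succ m hjm ih =>
        intro hm1 E hE
        have hxm : x m = x' m := hsame m (by omega) (by omega)
        rw [sumTrajLaw_succ_apply K θ₀ x m hE, sumTrajLaw_succ_apply K θ₀ x' m hE, hxm]
        exact dp_lintegral_le _ _ c δ'
          (fun p => K m (p.1, x' m) ((fun θ => (θ, p.2 + θ)) ⁻¹' E))
          (step_meas (K m) (x' m) hE) (fun p => prob_le_one)
          (fun E' hE' => ih (by omega) E' hE')
  -- apply the claim to the averaged mechanism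
  have hsmul : Measurable fun p : (Fin d → ℝ) × (Fin d → ℝ) => (n : ℝ)⁻¹ • p.2 := measurable_snd.const_smul ((n : ℝ)⁻¹)
  have hmain : avgLaw K θ₀ x n E ≤ c * avgLaw K θ₀ x' n E + δ' := by
    rw [avgLaw, avgLaw, Measure.map_apply hsmul hE, Measure.map_apply hsmul hE]
    exact claim n (by omega) le_rfl _ (hsmul hE)
  refine hmain.trans (add_le_add (mul_le_mul_left ?_ _) ?_)
  · exact ENNReal.ofReal_le_ofReal (Real.exp_le_exp.2
      (le_ciSup (Set.Finite.bddAbove (Set.finite_range fun i : Fin n => ε i)) ⟨j, hj⟩))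
  · exact ENNReal.ofReal_le_ofReal
      (le_ciSup (Set.Finite.bddAbove (Set.finite_range fun i : Fin n => δ i)) ⟨j, hj⟩)
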